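/- (Semigroup-type property of the 1-d wave kernel) Let G_t(x) = (1/2)·1_{|x|<t} for d = 1. Then for any 0 < r < t and x, z ∈ ℝ, ∫_r^t ∫_ℝ G_{t−s}(x−y) G_{s−r}(y−z) dy ds ≤ C t² G_{t−r}(x−z) for some absolute constant C > 0. -/

import Mathlib

open MeasureTheory

/-- The fundamental solution of the one-dimensional wave equation. -/
noncomputable def waveKernel (t x : ℝ) : ℝ := if |x| < t then 1 / 2 else 0

lemma waveKernel_nonneg (t x : ℝ) : 0 ≤ waveKernel t x := by
  unfold waveKernel; split <;> norm_num

lemma waveKernel_le_half (t x : ℝ) : waveKernel t x ≤ 1 / 2 := by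
  unfold waveKernel; split <;> norm_num

lemma waveKernel_shift (a x y : ℝ) :
    waveKernel a (x - y) =
      Set.indicator (Set.Ioo (x - a) (x + a)) (fun _ => (1 : ℝ) / 2) y := by
  unfold waveKernel
  rw [Set.indicator_apply]
  have : |x - y| < a ↔ y ∈ Set.Ioo (x - a) (x + a) := by
    rw [Set.mem_Ioo, abs_lt]
    constructor <;> rintro ⟨h1, h2⟩ <;> constructor <;> linarith
  simp only [this]

lemma waveKernel_integrable (a x : ℝ) :
    Integrable (fun y => waveKernel a (x - y)) := by
  have : (fun y => waveKernel a (x - y)) =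
      Set.indicator (Set.Ioo (x - a) (x + a)) (fun _ => (1 : ℝ) / 2) := by
    funext y; exact waveKernel_shift a x y
  rw [this, integrable_indicator_iff measurableSet_Ioo]
  exact integrableOn_const measure_Ioo_lt_top.ne

lemma waveKernel_integral (a x : ℝ) (ha : 0 ≤ a) :
    (∫ y : ℝ, waveKernel a (x - y)) = a := by
  have : (fun y => waveKernel a (x - y)) =
      Set.indicator (Set.Ioo (x - a) (x + a)) (fun _ => (1 : ℝ) / 2) := by
    funext y; exact waveKernel_shift a x y
  rw [this, integral_indicator_const _ measurableSet_Ioo, measureReal_def, Real.volume_Ioo]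
  have h2 : x + a - (x - a) = 2 * a := by ring
  rw [h2, ENNReal.toReal_ofReal (by linarith)]
  simp; ring

lemma inner_bound (a b x z : ℝ) (ha : 0 ≤ a) :
    (∫ y : ℝ, waveKernel a (x - y) * waveKernel b (y - z)) ≤ a / 2 := by
  have hmono : (∫ y : ℝ, waveKernel a (x - y) * waveKernel b (y - z)) ≤
      ∫ y : ℝ, (1 / 2 : ℝ) * waveKernel a (x - y) := by
    apply integral_mono_of_nonneg
    · filter_upwards with y
      exact mul_nonneg (waveKernel_nonneg _ _) (waveKernel_nonneg _ _)
    · exact (waveKernel_integrable a x).const_mul _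
    · filter_upwards with y
      rw [mul_comm ((1:ℝ)/2)]
      exact mul_le_mul_of_nonneg_left (waveKernel_le_half _ _) (waveKernel_nonneg _ _)
  calc (∫ y : ℝ, waveKernel a (x - y) * waveKernel b (y - z))
      ≤ ∫ y : ℝ, (1 / 2 : ℝ) * waveKernel a (x - y) := hmono
    _ = (1 / 2 : ℝ) * ∫ y : ℝ, waveKernel a (x - y) := integral_const_mul _ _
    _ = a / 2 := by rw [waveKernel_integral a x ha]; ring

theorem stmt_17 :
    ∃ C : ℝ, 0 < C ∧ ∀ r t x z : ℝ, 0 < r → r < t →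
      (∫ s in r..t, ∫ y : ℝ, waveKernel (t - s) (x - y) * waveKernel (s - r) (y - z)) ≤
        C * t ^ 2 * waveKernel (t - r) (x - z) := by
  refine ⟨1, one_pos, ?_⟩
  intro r t x z hr hrt
  have ht : 0 < t := hr.trans hrt
  by_cases hxz : |x - z| < t - r
  · -- RHS = t^2 / 2
    have hRHS : waveKernel (t - r) (x - z) = 1 / 2 := if_pos hxz
    rw [hRHS]
    by_cases hInt : IntervalIntegrable
        (fun s => ∫ y : ℝ, waveKernel (t - s) (x - y) * waveKernel (s - r) (y - z))
        volume r t
    · have hmono : (∫ s in r..t, ∫ y : ℝ,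
          waveKernel (t - s) (x - y) * waveKernel (s - r) (y - z)) ≤
          ∫ s in r..t, (t - s) / 2 := by
        apply intervalIntegral.integral_mono_on hrt.le hInt
        · exact (Continuous.intervalIntegrable (by continuity) r t)
        · intro s hs
          exact inner_bound _ _ _ _ (by linarith [hs.2])
      have hcalc : (∫ s in r..t, (t - s) / 2) = (t - r) ^ 2 / 4 := by
        simp only [div_eq_inv_mul]
        rw [intervalIntegral.integral_const_mul,
          intervalIntegral.integral_sub intervalIntegrable_const
            intervalIntegral.intervalIntegrable_id,
          intervalIntegral.integral_const, integral_id, smul_eq_mul]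
        ring
      have htr : (t - r) ^ 2 ≤ t ^ 2 := by nlinarith
      calc (∫ s in r..t, ∫ y : ℝ,
            waveKernel (t - s) (x - y) * waveKernel (s - r) (y - z))
          ≤ (t - r) ^ 2 / 4 := by rw [← hcalc]; exact hmono
        _ ≤ 1 * t ^ 2 * (1 / 2) := by nlinarith
    · rw [intervalIntegral.integral_undef hInt]
      positivity
  · -- kernel on the right is 0 and integrand vanishes
    have hRHS : waveKernel (t - r) (x - z) = 0 := if_neg hxz
    rw [hRHS, mul_zero]
    have hzero : ∀ s y : ℝ,
        waveKernel (t - s) (x - y) * waveKernel (s - r) (y - z) = 0 := by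
      intro s y
      by_cases h1 : |x - y| < t - s
      · by_cases h2 : |y - z| < s - r
        · exfalso
          apply hxz
          calc |x - z| ≤ |x - y| + |y - z| := abs_sub_le x y z
            _ < (t - s) + (s - r) := add_lt_add h1 h2
            _ = t - r := by ring
        · have : waveKernel (s - r) (y - z) = 0 := if_neg h2
          rw [this, mul_zero]
      · have : waveKernel (t - s) (x - y) = 0 := if_neg h1
        rw [this, zero_mul]
    have : (∫ s in r..t, ∫ y : ℝ,
        waveKernel (t - s) (x - y) * waveKernel (s - r) (y - z)) = 0 := by
      have heq : ∀ s : ℝ, (∫ y : ℝ,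
          waveKernel (t - s) (x - y) * waveKernel (s - r) (y - z)) = 0 := by
        intro s
        simp [hzero s]
      simp [heq]
    rw [this]
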